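/- If an open cover 𝒰 of a topological space X admits a 𝒰-small partition of unity, then 𝒰 has a σ-discrete closed refinement. -/

import Mathlib

noncomputable section
open Set Topology TopologicalSpace

/-- `𝒰` is an open cover of `X`. -/
def IsOpenCover {X : Type} [TopologicalSpace X] (𝒰 : Set (Set X)) : Prop :=
  (∀ U ∈ 𝒰, IsOpen U) ∧ ⋃₀ 𝒰 = univ

/-- Star of a point with respect to a family of sets. -/
def ptStar {X : Type} (x : X) (𝒰 : Set (Set X)) : Set X := ⋃₀ {U | U ∈ 𝒰 ∧ x ∈ U}

/-- Star of a set with respect to a family of sets. -/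
def setStar {X : Type} (A : Set X) (𝒰 : Set (Set X)) : Set X :=
  ⋃₀ {U | U ∈ 𝒰 ∧ (U ∩ A).Nonempty}

/-- `𝒱` star-refines `𝒰`. -/
def StarRefines {X : Type} (𝒱 𝒰 : Set (Set X)) : Prop :=
  ∀ x : X, ∃ U ∈ 𝒰, ptStar x 𝒱 ⊆ U

/-- A continuous partition of unity viewed as a map into `l¹(S)` with image in `Δ(S)`. -/
def IsPU {X S : Type} [TopologicalSpace X] (f : X → lp (fun _ : S => ℝ) 1) : Prop :=
  Continuous f ∧ ∀ x : X, (∀ s : S, 0 ≤ f x s) ∧ HasSum (fun s => f x s) 1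

/-- The partition of unity `f` is `𝒰`-small: each carrier lies in a member of `𝒰`. -/
def IsUSmall {X S : Type} [TopologicalSpace X] (𝒰 : Set (Set X))
    (f : X → lp (fun _ : S => ℝ) 1) : Prop :=
  ∀ s : S, ∃ U ∈ 𝒰, {x : X | f x s ≠ 0} ⊆ U

/-- There exists a `𝒰`-small partition of unity on `X`. -/
def ExistsUSmallPU {X : Type} [TopologicalSpace X] (𝒰 : Set (Set X)) : Prop :=
  ∃ (S : Type) (f : X → lp (fun _ : S => ℝ) 1), IsPU f ∧ IsUSmall 𝒰 f

/-- An indexed family of sets is discrete. -/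
def DiscreteFam {X S : Type} [TopologicalSpace X] (A : S → Set X) : Prop :=
  ∀ x : X, ∃ N ∈ nhds x, {s : S | (A s ∩ N).Nonempty}.Subsingleton

/-- A family of sets (as a set of sets) is discrete. -/
def DiscreteSetFam {X : Type} [TopologicalSpace X] (𝒜 : Set (Set X)) : Prop :=
  ∀ x : X, ∃ N ∈ nhds x, {A | A ∈ 𝒜 ∧ (A ∩ N).Nonempty}.Subsingleton

/-- `𝒰` has a σ-discrete closed refinement. -/
def HasSigmaDiscreteClosedRefinement {X : Type} [TopologicalSpace X]
    (𝒰 : Set (Set X)) : Prop :=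
  ∃ D : ℕ → Set (Set X), (∀ n, DiscreteSetFam (D n)) ∧
    (∀ n, ∀ F ∈ D n, IsClosed F) ∧
    (∀ n, ∀ F ∈ D n, ∃ U ∈ 𝒰, F ⊆ U) ∧
    ⋃₀ (⋃ n, D n) = univ

/-- `X` is collectionwise normal. -/
def CwNormal (X : Type) [TopologicalSpace X] : Prop :=
  ∀ (S : Type) (A : S → Set X), (∀ s, IsClosed (A s)) → DiscreteFam A →
    ∃ V : S → Set X, (∀ s, IsOpen (V s)) ∧ (∀ s, A s ⊆ V s) ∧ DiscreteFam V

/-- If an open cover admits a `𝒰`-small partition of unity, then it has a σ-discrete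
closed refinement. -/
theorem stmt16 (X : Type) [TopologicalSpace X] (𝒰 : Set (Set X))
    (hcov : IsOpenCover 𝒰) (h : ExistsUSmallPU 𝒰) :
    HasSigmaDiscreteClosedRefinement 𝒰 := by
  obtain ⟨S, f, ⟨hfc, hfx⟩, hsmall⟩ := h
  have hcoord : ∀ s : S, Continuous fun x => f x s := by
    intro s
    have hlip : LipschitzWith 1 (fun g : lp (fun _ : S => ℝ) 1 => g s) := by
      apply LipschitzWith.of_dist_le_mul
      intro g h
      rw [NNReal.coe_one, one_mul, dist_eq_norm, dist_eq_norm]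
      have := lp.norm_apply_le_norm (one_ne_zero) (g - h) s
      simpa [lp.coeFn_sub] using this
    exact hlip.continuous.comp hfc
  letI : IsWellOrder S WellOrderingRel := WellOrderingRel.isWellOrder
  set r := (WellOrderingRel : S → S → Prop) with hr
  have wf : WellFounded r := IsWellFounded.wf
  set C : ℕ → S → Set X := fun n s =>
    {x | 1/(n+1:ℝ) ≤ f x s ∧ ∀ t, r t s → f x t ≤ 1/(n+2:ℝ)} with hCdef
  refine ⟨fun n => Set.range (C n), ?_, ?_, ?_, ?_⟩
  · -- discreteness
    intro n x
    set δ : ℝ := 1/(n+1:ℝ) - 1/(n+2:ℝ) with hδ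
    have hδpos : 0 < δ := by
      rw [hδ]
      have : (1:ℝ)/(n+2) < 1/(n+1) :=
        one_div_lt_one_div_of_lt (by positivity) (by linarith)
      linarith
    refine ⟨f ⁻¹' Metric.ball (f x) (δ/2),
      (Metric.isOpen_ball.preimage hfc).mem_nhds (by simp [Metric.mem_ball]; positivity), ?_⟩
    intro A hA B hB
    obtain ⟨⟨s, rfl⟩, y, hyC, hyN⟩ := hA
    obtain ⟨⟨t, rfl⟩, z, hzC, hzN⟩ := hB
    have key : ∀ u : S, |f y u - f z u| < δ := by
      intro u
      have h1 : dist (f y) (f z) < δ := by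
        calc dist (f y) (f z) ≤ dist (f y) (f x) + dist (f x) (f z) := dist_triangle _ _ _
        _ < δ/2 + δ/2 := by
            have := Metric.mem_ball.mp hyN
            have := Metric.mem_ball.mp hzN
            rw [dist_comm (f x)] at *
            linarith [Metric.mem_ball.mp hyN, Metric.mem_ball.mp hzN]
        _ = δ := by ring
      have h2 : |f y u - f z u| ≤ dist (f y) (f z) := by
        rw [dist_eq_norm]
        have := lp.norm_apply_le_norm (one_ne_zero) (f y - f z) u
        simpa [lp.coeFn_sub, abs_sub_comm] using this
      linarith
    rcases trichotomous_of r s t with hst | rfl | hts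
    · exfalso
      have h1 : 1/(n+1:ℝ) ≤ f y s := hyC.1
      have h2 : f z s ≤ 1/(n+2:ℝ) := hzC.2 s hst
      have := abs_lt.mp (key s)
      rw [hδ] at this
      linarith [this.2]
    · rfl
    · exfalso
      have h1 : 1/(n+1:ℝ) ≤ f z t := hzC.1
      have h2 : f y t ≤ 1/(n+2:ℝ) := hyC.2 t hts
      have := abs_lt.mp (key t)
      rw [hδ] at this
      linarith [this.1]
  · -- closedness
    intro n F hF
    obtain ⟨s, rfl⟩ := hF
    have h1 : IsClosed {x : X | 1/(n+1:ℝ) ≤ f x s} :=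
      isClosed_le continuous_const (hcoord s)
    have h2 : IsClosed (⋂ t, ⋂ _ : r t s, {x : X | f x t ≤ 1/(n+2:ℝ)}) :=
      isClosed_iInter fun t => isClosed_iInter fun _ =>
        isClosed_le (hcoord t) continuous_const
    have heq : C n s = {x : X | 1/(n+1:ℝ) ≤ f x s} ∩
        ⋂ t, ⋂ _ : r t s, {x : X | f x t ≤ 1/(n+2:ℝ)} := by
      ext x
      simp [hCdef]
    rw [heq]
    exact h1.inter h2
  · -- refinement
    intro n F hF
    obtain ⟨s, rfl⟩ := hF
    obtain ⟨U, hU, hsub⟩ := hsmall s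
    refine ⟨U, hU, fun x hx => hsub ?_⟩
    have h1 : 1/(n+1:ℝ) ≤ f x s := hx.1
    have : (0:ℝ) < 1/(n+1:ℝ) := by positivity
    exact fun h0 => by simp [h0] at h1; linarith
  · -- cover
    apply eq_univ_of_forall
    intro x
    have hpos : ∃ s, 0 < f x s := by
      by_contra hno
      push_neg at hno
      have hall : ∀ s, f x s = 0 := fun s => le_antisymm (hno s) ((hfx x).1 s)
      have : (1:ℝ) = 0 := (hfx x).2.unique (by simpa [hall] using hasSum_zero)
      norm_num at this
    have hne : {s | 0 < f x s}.Nonempty := hpos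
    set s₀ := wf.min {s | 0 < f x s} hne with hs₀
    have hmem : 0 < f x s₀ := wf.min_mem _ hne
    obtain ⟨n, hn⟩ := exists_nat_one_div_lt hmem
    refine mem_sUnion.mpr ⟨C n s₀, ?_, ?_⟩
    · exact mem_iUnion.mpr ⟨n, ⟨s₀, rfl⟩⟩
    · constructor
      · exact le_of_lt hn
      · intro t ht
        have : t ∉ {s | 0 < f x s} := fun hmem' => wf.not_lt_min _ hmem' ht
        have h0 : f x t = 0 := le_antisymm (not_lt.mp this) ((hfx x).1 t)
        rw [h0]
        positivity
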